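/- For all ψ₁, ψ₂ ∈ [−π/2, π/2], the inequality 2·cos((ψ₁+ψ₂)/2) + 2·√(cos ψ₁ · cos ψ₂) ≤ √2·((1−sin ψ₁)^{1/3} + (1+sin ψ₁)^{1/3})^{3/2} holds. -/

import Mathlib

open Real

/-- Two-term Hölder inequality with exponents `4/3` and `4`. -/
lemma holder2 {x1 x2 y1 y2 : ℝ} (h1 : 0 ≤ x1) (h2 : 0 ≤ x2) (h3 : 0 ≤ y1) (h4 : 0 ≤ y2) :
    x1 * y1 + x2 * y2 ≤
      (x1 ^ ((4 : ℝ)/3) + x2 ^ ((4 : ℝ)/3)) ^ ((3 : ℝ)/4) *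
        (y1 ^ (4 : ℝ) + y2 ^ (4 : ℝ)) ^ ((1 : ℝ)/4) := by
  have hpq : Real.HolderConjugate ((4 : ℝ)/3) 4 := Real.holderConjugate_iff.mpr ⟨by norm_num, by norm_num⟩
  have := Real.inner_le_Lp_mul_Lq_of_nonneg (s := (Finset.univ : Finset (Fin 2)))
    (f := ![x1, x2]) (g := ![y1, y2]) hpq
    (by intro i _; fin_cases i <;> simpa)
    (by intro i _; fin_cases i <;> simpa)
  have e34 : (1 : ℝ) / ((4:ℝ)/3) = (3:ℝ)/4 := by norm_num
  simpa [Fin.sum_univ_two, e34] using this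

set_option maxHeartbeats 1000000 in
/-- For all `ψ₁, ψ₂ ∈ [−π/2, π/2]`,
`2cos((ψ₁+ψ₂)/2) + 2√(cos ψ₁ cos ψ₂) ≤ √2·((1−sin ψ₁)^{1/3}+(1+sin ψ₁)^{1/3})^{3/2}`. -/
theorem boundary_case_inequality
    (ψ₁ ψ₂ : ℝ) (hψ₁ : ψ₁ ∈ Set.Icc (-(π / 2)) (π / 2))
    (hψ₂ : ψ₂ ∈ Set.Icc (-(π / 2)) (π / 2)) :
    2 * Real.cos ((ψ₁ + ψ₂) / 2) + 2 * Real.sqrt (Real.cos ψ₁ * Real.cos ψ₂) ≤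
      Real.sqrt 2 *
        ((1 - Real.sin ψ₁) ^ ((1 : ℝ) / 3) +
          (1 + Real.sin ψ₁) ^ ((1 : ℝ) / 3)) ^ ((3 : ℝ) / 2) := by
  obtain ⟨h1l, h1r⟩ := hψ₁
  obtain ⟨h2l, h2r⟩ := hψ₂
  have hs2pos : (0:ℝ) < Real.sqrt 2 := by positivity
  have hs2sq : Real.sqrt 2 * Real.sqrt 2 = 2 := Real.mul_self_sqrt (by norm_num)
  -- nonnegativity of cos(ψ/2) ± sin(ψ/2)
  have key : ∀ ψ : ℝ, -(π/2) ≤ ψ → ψ ≤ π/2 →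
      0 ≤ Real.cos (ψ/2) - Real.sin (ψ/2) ∧ 0 ≤ Real.cos (ψ/2) + Real.sin (ψ/2) := by
    intro ψ hl hr
    have hπ := Real.pi_pos
    have e1 : Real.sqrt 2 * Real.cos (ψ/2 + π/4) = Real.cos (ψ/2) - Real.sin (ψ/2) := by
      rw [Real.cos_add, Real.cos_pi_div_four, Real.sin_pi_div_four]
      linear_combination ((Real.cos (ψ/2) - Real.sin (ψ/2))/2) * hs2sq
    have e2 : Real.sqrt 2 * Real.cos (ψ/2 - π/4) = Real.cos (ψ/2) + Real.sin (ψ/2) := by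
      rw [Real.cos_sub, Real.cos_pi_div_four, Real.sin_pi_div_four]
      linear_combination ((Real.cos (ψ/2) + Real.sin (ψ/2))/2) * hs2sq
    have n1 : 0 ≤ Real.cos (ψ/2 + π/4) :=
      Real.cos_nonneg_of_mem_Icc ⟨by linarith, by linarith⟩
    have n2 : 0 ≤ Real.cos (ψ/2 - π/4) :=
      Real.cos_nonneg_of_mem_Icc ⟨by linarith, by linarith⟩
    constructor
    · rw [← e1]; positivity
    · rw [← e2]; positivity
  obtain ⟨hb', ha'⟩ := key ψ₁ h1l h1r
  obtain ⟨hq', hp'⟩ := key ψ₂ h2l h2r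
  obtain ⟨a, hadef⟩ : ∃ x : ℝ, x = Real.cos (ψ₁/2) + Real.sin (ψ₁/2) := ⟨_, rfl⟩
  obtain ⟨b, hbdef⟩ : ∃ x : ℝ, x = Real.cos (ψ₁/2) - Real.sin (ψ₁/2) := ⟨_, rfl⟩
  obtain ⟨p, hpdef⟩ : ∃ x : ℝ, x = Real.cos (ψ₂/2) + Real.sin (ψ₂/2) := ⟨_, rfl⟩
  obtain ⟨q, hqdef⟩ : ∃ x : ℝ, x = Real.cos (ψ₂/2) - Real.sin (ψ₂/2) := ⟨_, rfl⟩
  have ha : 0 ≤ a := hadef ▸ ha'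
  have hb : 0 ≤ b := hbdef ▸ hb'
  have hp : 0 ≤ p := hpdef ▸ hp'
  have hq : 0 ≤ q := hqdef ▸ hq'
  have py1 : Real.sin (ψ₁/2) ^ 2 + Real.cos (ψ₁/2) ^ 2 = 1 := Real.sin_sq_add_cos_sq _
  have py2 : Real.sin (ψ₂/2) ^ 2 + Real.cos (ψ₂/2) ^ 2 = 1 := Real.sin_sq_add_cos_sq _
  -- trig identities
  have hcos1 : Real.cos ψ₁ = b * a := by
    have h := Real.cos_two_mul' (ψ₁/2)
    rw [show 2*(ψ₁/2) = ψ₁ by ring] at h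
    rw [h, hadef, hbdef]; ring
  have hcos2 : Real.cos ψ₂ = q * p := by
    have h := Real.cos_two_mul' (ψ₂/2)
    rw [show 2*(ψ₂/2) = ψ₂ by ring] at h
    rw [h, hpdef, hqdef]; ring
  have hsin1 : Real.sin ψ₁ = 2 * Real.sin (ψ₁/2) * Real.cos (ψ₁/2) := by
    have h := Real.sin_two_mul (ψ₁/2)
    rwa [show 2*(ψ₁/2) = ψ₁ by ring] at h
  have hone_sub : 1 - Real.sin ψ₁ = b ^ 2 := by
    rw [hsin1, hbdef]; linear_combination -py1
  have hone_add : 1 + Real.sin ψ₁ = a ^ 2 := by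
    rw [hsin1, hadef]; linear_combination -py1
  have hsum : Real.cos ((ψ₁ + ψ₂)/2) = (a * q + b * p) / 2 := by
    have : (ψ₁ + ψ₂)/2 = ψ₁/2 + ψ₂/2 := by ring
    rw [this, Real.cos_add, hadef, hbdef, hpdef, hqdef]; ring
  -- abbreviations for the Hölder step
  obtain ⟨X, hXdef⟩ : ∃ x : ℝ, x = a ^ ((1:ℝ)/2) * q ^ ((1:ℝ)/2) := ⟨_, rfl⟩
  obtain ⟨Y, hYdef⟩ : ∃ x : ℝ, x = b ^ ((1:ℝ)/2) * p ^ ((1:ℝ)/2) := ⟨_, rfl⟩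
  have hXnn : 0 ≤ X := by rw [hXdef]; positivity
  have hYnn : 0 ≤ Y := by rw [hYdef]; positivity
  have hX2 : X ^ 2 = a * q := by
    rw [hXdef, mul_pow, ← Real.rpow_natCast (a ^ ((1:ℝ)/2)) 2,
      ← Real.rpow_natCast (q ^ ((1:ℝ)/2)) 2, ← Real.rpow_mul ha, ← Real.rpow_mul hq]
    norm_num
  have hY2 : Y ^ 2 = b * p := by
    rw [hYdef, mul_pow, ← Real.rpow_natCast (b ^ ((1:ℝ)/2)) 2,
      ← Real.rpow_natCast (p ^ ((1:ℝ)/2)) 2, ← Real.rpow_mul hb, ← Real.rpow_mul hp]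
    norm_num
  -- LHS equals (X + Y)^2
  have hsqrt : Real.sqrt (Real.cos ψ₁ * Real.cos ψ₂) = X * Y := by
    rw [hcos1, hcos2]
    have : b * a * (q * p) = (a * q) * (b * p) := by ring
    rw [this, ← hX2, ← hY2, ← mul_pow, Real.sqrt_sq (by positivity)]
  have hLHS : 2 * Real.cos ((ψ₁ + ψ₂) / 2) + 2 * Real.sqrt (Real.cos ψ₁ * Real.cos ψ₂)
      = (X + Y) ^ 2 := by
    rw [hsum, hsqrt, ← hX2, ← hY2]; ring
  -- Hölder inequality
  have hold := holder2 (x1 := a ^ ((1:ℝ)/2)) (x2 := b ^ ((1:ℝ)/2))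
    (y1 := q ^ ((1:ℝ)/2)) (y2 := p ^ ((1:ℝ)/2))
    (by positivity) (by positivity) (by positivity) (by positivity)
  have ea : (a ^ ((1:ℝ)/2)) ^ ((4:ℝ)/3) = a ^ ((2:ℝ)/3) := by
    rw [← Real.rpow_mul ha]; norm_num
  have eb : (b ^ ((1:ℝ)/2)) ^ ((4:ℝ)/3) = b ^ ((2:ℝ)/3) := by
    rw [← Real.rpow_mul hb]; norm_num
  have eq4 : (q ^ ((1:ℝ)/2)) ^ ((4:ℝ)) = q ^ 2 := by
    rw [← Real.rpow_mul hq, ← Real.rpow_natCast q 2]; norm_num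
  have ep4 : (p ^ ((1:ℝ)/2)) ^ ((4:ℝ)) = p ^ 2 := by
    rw [← Real.rpow_mul hp, ← Real.rpow_natCast p 2]; norm_num
  have hqp2 : q ^ 2 + p ^ 2 = 2 := by
    rw [hpdef, hqdef]; linear_combination 2*py2
  rw [ea, eb, eq4, ep4, hqp2] at hold
  obtain ⟨S, hSdef⟩ : ∃ x : ℝ, x = a ^ ((2:ℝ)/3) + b ^ ((2:ℝ)/3) := ⟨_, rfl⟩
  have hSnn : 0 ≤ S := by rw [hSdef]; positivity
  have hXY : X + Y ≤ S ^ ((3:ℝ)/4) * (2:ℝ) ^ ((1:ℝ)/4) := by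
    rw [hXdef, hYdef, hSdef]; exact hold
  -- RHS equals (S^(3/4) * 2^(1/4))^2
  have hb23 : (1 - Real.sin ψ₁) ^ ((1:ℝ)/3) = b ^ ((2:ℝ)/3) := by
    rw [hone_sub, ← Real.rpow_natCast b 2, ← Real.rpow_mul hb]; norm_num
  have ha23 : (1 + Real.sin ψ₁) ^ ((1:ℝ)/3) = a ^ ((2:ℝ)/3) := by
    rw [hone_add, ← Real.rpow_natCast a 2, ← Real.rpow_mul ha]; norm_num
  have hRHS : Real.sqrt 2 * ((1 - Real.sin ψ₁) ^ ((1:ℝ)/3)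
        + (1 + Real.sin ψ₁) ^ ((1:ℝ)/3)) ^ ((3:ℝ)/2)
      = (S ^ ((3:ℝ)/4) * (2:ℝ) ^ ((1:ℝ)/4)) ^ 2 := by
    rw [hb23, ha23, mul_pow, ← Real.rpow_natCast (S ^ ((3:ℝ)/4)) 2,
      ← Real.rpow_natCast ((2:ℝ) ^ ((1:ℝ)/4)) 2, ← Real.rpow_mul hSnn,
      ← Real.rpow_mul (by norm_num : (0:ℝ) ≤ 2)]
    have e2 : ((2:ℝ)) ^ ((1:ℝ)/4 * (2:ℕ)) = Real.sqrt 2 := by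
      rw [show ((1:ℝ)/4 * (2:ℕ)) = (1:ℝ)/2 by push_cast; ring, ← Real.sqrt_eq_rpow]
    rw [e2]
    have e3 : ((3:ℝ)/4 * (2:ℕ)) = (3:ℝ)/2 := by push_cast; ring
    rw [e3, hSdef, add_comm (b ^ ((2:ℝ)/3)) (a ^ ((2:ℝ)/3))]
    ring
  rw [hLHS, hRHS]
  exact pow_le_pow_left₀ (by positivity) hXY 2
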